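/- Let μ₁ ≥ N ≥ 0 and μ₂ > 0, and let (x₁, x₂) be a Filippov solution of the twisting closed loop on [0,∞). Then the function t ↦ V(x₁(t), x₂(t)) is nonincreasing on [0,∞); in particular, if V(x₁(0), x₂(0)) ≤ R for some R > 0, then (x₁(t), x₂(t)) ∈ Γ_R for all t ≥ 0. -/

import Mathlib

open MeasureTheory

section AuxiliaryLemmas

open Set Filter Topology intervalIntegral

lemma mvt_helper {φ φd : ℝ → ℝ} (hφ : ∀ x, HasDerivAt φ (φd x) x) (x y : ℝ) :
    ∃ c ∈ Set.uIcc x y, φ y - φ x = φd c * (y - x) := by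
  rcases lt_trichotomy x y with h | h | h
  · obtain ⟨c, hc, hceq⟩ := exists_hasDerivAt_eq_slope φ φd h
      (fun z _ => (hφ z).continuousAt.continuousWithinAt) (fun z _ => hφ z)
    refine ⟨c, Set.mem_uIcc.2 (Or.inl ⟨hc.1.le, hc.2.le⟩), ?_⟩
    rw [hceq, div_mul_cancel₀ _ (sub_ne_zero.2 h.ne')]
  · exact ⟨x, Set.left_mem_uIcc, by rw [h]; ring⟩
  · obtain ⟨c, hc, hceq⟩ := exists_hasDerivAt_eq_slope φ φd h
      (fun z _ => (hφ z).continuousAt.continuousWithinAt) (fun z _ => hφ z)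
    refine ⟨c, Set.mem_uIcc.2 (Or.inr ⟨hc.1.le, hc.2.le⟩), ?_⟩
    rw [hceq]
    have hne : x - y ≠ 0 := sub_ne_zero.2 h.ne'
    field_simp
    ring

lemma chain_rule_primitive {v f : ℝ → ℝ} {a b : ℝ} (hab : a ≤ b)
    (hv : IntegrableOn v (Set.Icc a b) volume)
    (hf : ∀ t ∈ Set.Icc a b, f t = f a + ∫ s in a..t, v s)
    {φ φd : ℝ → ℝ} (hφ : ∀ x, HasDerivAt φ (φd x) x) (hφd : Continuous φd) :
    φ (f b) - φ (f a) = ∫ t in a..b, φd (f t) * v t := by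
  rcases eq_or_lt_of_le hab with rfl | hab'
  · simp
  have hprim : ContinuousOn (fun t => f a + ∫ s in a..t, v s) (Set.Icc a b) := by
    have h2 := intervalIntegral.continuousOn_primitive_interval
      (a := a) (b := b) (μ := volume) (f := v) (by rwa [Set.uIcc_of_le hab])
    rw [Set.uIcc_of_le hab] at h2
    exact continuousOn_const.add h2
  have hfc : ContinuousOn f (Set.Icc a b) := hprim.congr hf
  obtain ⟨M, hM⟩ := (isCompact_Icc (a := a) (b := b)).exists_bound_of_continuousOn hfc
  have hM0 : 0 ≤ M := le_trans (norm_nonneg _) (hM a (Set.left_mem_Icc.2 hab))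
  have hKf : ∀ t ∈ Set.Icc a b, f t ∈ Set.Icc (-M) M := fun t ht => by
    have h3 := hM t ht; rw [Real.norm_eq_abs, abs_le] at h3; exact h3
  have hucφ : UniformContinuousOn φd (Set.Icc (-M) M) :=
    isCompact_Icc.uniformContinuousOn_of_continuous hφd.continuousOn
  have hucf : UniformContinuousOn f (Set.Icc a b) :=
    isCompact_Icc.uniformContinuousOn_of_continuous hfc
  have hvab : IntervalIntegrable v volume a b := by
    rw [intervalIntegrable_iff', Set.uIcc_of_le hab]; exact hv
  have hgab : IntervalIntegrable (fun t => φd (f t) * v t) volume a b :=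
    hvab.continuousOn_mul (by rw [Set.uIcc_of_le hab]; exact hφd.comp_continuousOn hfc)
  set C : ℝ := (∫ t in a..b, |v t|) + 1 with hC
  have hC1 : (1:ℝ) ≤ C := by
    have h4 : 0 ≤ ∫ t in a..b, |v t| :=
      intervalIntegral.integral_nonneg hab (fun t _ => abs_nonneg _)
    simp only [hC]; linarith
  have key : ∀ ε > (0:ℝ), |φ (f b) - φ (f a) - ∫ t in a..b, φd (f t) * v t| ≤ ε * C := by
    intro ε hε
    obtain ⟨δ, hδ, hδφ⟩ := (Metric.uniformContinuousOn_iff).1 hucφ ε hε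
    obtain ⟨δ₂, hδ₂, hδf⟩ := (Metric.uniformContinuousOn_iff).1 hucf (δ/2) (by linarith)
    obtain ⟨n, hn⟩ := exists_nat_gt ((b - a) / δ₂)
    set N : ℕ := n + 1 with hNdef
    have hN : 0 < (N:ℝ) := by positivity
    set q : ℝ := (b - a) / N with hq
    have hq0 : 0 < q := div_pos (by linarith) hN
    have hqδ : q < δ₂ := by
      rw [hq, div_lt_iff₀ hN]
      have h1 : (b - a) / δ₂ < (N:ℝ) := lt_of_lt_of_le hn (by exact_mod_cast Nat.le_succ n)
      calc b - a = ((b - a) / δ₂) * δ₂ := by field_simp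
        _ < (N:ℝ) * δ₂ := mul_lt_mul_of_pos_right h1 hδ₂
        _ = δ₂ * N := mul_comm _ _
    set p : ℕ → ℝ := fun k => a + k * q with hp
    have hp0 : p 0 = a := by simp [hp]
    have hpN : p N = b := by
      simp only [hp, hq]; field_simp
      ring
    have hpmono : ∀ k : ℕ, p k ≤ p (k + 1) := fun k => by
      simp only [hp]; push_cast; nlinarith [hq0.le]
    have hpk1 : ∀ k : ℕ, p (k + 1) - p k = q := fun k => by simp only [hp]; push_cast; ring
    have hpmem : ∀ k : ℕ, k ≤ N → p k ∈ Set.Icc a b := by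
      intro k hk
      have hkN : (k:ℝ) ≤ N := Nat.cast_le.2 hk
      constructor
      · simp only [hp]; nlinarith [hq0.le, Nat.cast_nonneg (α := ℝ) k]
      · have h5 : p k ≤ p N := by simp only [hp]; nlinarith [hq0.le]
        rwa [hpN] at h5
    have hsub : ∀ k : ℕ, k < N → Set.uIcc (p k) (p (k+1)) ⊆ Set.Icc a b := by
      intro k hk
      rw [Set.uIcc_of_le (hpmono k)]
      exact Set.Icc_subset_Icc (hpmem k hk.le).1 (hpmem (k+1) hk).2
    have hvloc : ∀ k : ℕ, k < N → IntervalIntegrable v volume (p k) (p (k+1)) := fun k hk => by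
      rw [intervalIntegrable_iff']
      exact hv.mono_set (hsub k hk)
    have hgloc : ∀ k : ℕ, k < N →
        IntervalIntegrable (fun t => φd (f t) * v t) volume (p k) (p (k+1)) :=
      fun k hk => (hvloc k hk).continuousOn_mul ((hφd.comp_continuousOn hfc).mono (hsub k hk))
    have habsloc : ∀ k : ℕ, k < N → IntervalIntegrable (fun t => |v t|) volume (p k) (p (k+1)) :=
      fun k hk => (hvloc k hk).abs
    have htel : φ (f b) - φ (f a) = ∑ k ∈ Finset.range N, (φ (f (p (k+1))) - φ (f (p k))) := by
      rw [Finset.sum_range_sub (fun k => φ (f (p k))) N, hp0, hpN]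
    have hint : (∫ t in a..b, φd (f t) * v t)
        = ∑ k ∈ Finset.range N, ∫ t in p k..p (k+1), φd (f t) * v t := by
      rw [intervalIntegral.sum_integral_adjacent_intervals hgloc, hp0, hpN]
    have habsint : (∫ t in a..b, |v t|)
        = ∑ k ∈ Finset.range N, ∫ t in p k..p (k+1), |v t| := by
      rw [intervalIntegral.sum_integral_adjacent_intervals habsloc, hp0, hpN]
    have hterm : ∀ k : ℕ, k < N →
        |φ (f (p (k+1))) - φ (f (p k)) - ∫ t in p k..p (k+1), φd (f t) * v t|
          ≤ ε * ∫ t in p k..p (k+1), |v t| := by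
      intro k hk
      obtain ⟨c, hc, hceq⟩ := mvt_helper hφ (f (p k)) (f (p (k+1)))
      have h1 : IntervalIntegrable v volume a (p (k+1)) := by
        rw [intervalIntegrable_iff', Set.uIcc_of_le (hpmem (k+1) hk).1]
        exact hv.mono_set (Set.Icc_subset_Icc le_rfl (hpmem (k+1) hk).2)
      have h2 : IntervalIntegrable v volume a (p k) := by
        rw [intervalIntegrable_iff', Set.uIcc_of_le (hpmem k hk.le).1]
        exact hv.mono_set (Set.Icc_subset_Icc le_rfl (hpmem k hk.le).2)
      have hdiff : f (p (k+1)) - f (p k) = ∫ t in p k..p (k+1), v t := by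
        rw [hf _ (hpmem (k+1) hk), hf _ (hpmem k hk.le), add_sub_add_left_eq_sub]
        exact intervalIntegral.integral_interval_sub_left h1 h2
      have hrw : φ (f (p (k+1))) - φ (f (p k)) - ∫ t in p k..p (k+1), φd (f t) * v t
          = ∫ t in p k..p (k+1), (φd c - φd (f t)) * v t := by
        rw [hceq, hdiff, ← intervalIntegral.integral_const_mul,
          ← intervalIntegral.integral_sub ((hvloc k hk).const_mul _) (hgloc k hk)]
        congr 1
        ext t
        ring
      rw [hrw]
      have hKc : c ∈ Set.Icc (-M) M := by
        have hKIcc : Set.Icc (-M) M = Set.uIcc (-M) M := (Set.uIcc_of_le (neg_le_self hM0)).symm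
        rw [hKIcc]
        refine Set.uIcc_subset_uIcc ?_ ?_ hc
        · rw [← hKIcc]; exact hKf _ (hpmem k hk.le)
        · rw [← hKIcc]; exact hKf _ (hpmem (k+1) hk)
      have hb1 : ∀ t ∈ Set.uIoc (p k) (p (k+1)), ‖(φd c - φd (f t)) * v t‖ ≤ ε * |v t| := by
        intro t ht
        rw [Set.uIoc_of_le (hpmono k)] at ht
        have htmem : t ∈ Set.Icc a b :=
          (hsub k hk) (by rw [Set.uIcc_of_le (hpmono k)]; exact Set.Ioc_subset_Icc_self ht)
        have hdtk : dist (p k) t < δ₂ := by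
          rw [Real.dist_eq, abs_of_nonpos (by linarith [ht.1.le] : p k - t ≤ 0)]
          have := hpk1 k
          linarith [ht.1, ht.2, hqδ]
        have hdk1 : dist (p (k+1)) (p k) < δ₂ := by
          rw [Real.dist_eq, abs_of_nonneg (by linarith [hpmono k] : (0:ℝ) ≤ p (k+1) - p k)]
          linarith [hpk1 k, hqδ]
        have hft : dist (f (p k)) (f t) < δ / 2 := hδf _ (hpmem k hk.le) _ htmem hdtk
        have hfk : dist (f (p (k+1))) (f (p k)) < δ / 2 :=
          hδf _ (hpmem (k+1) hk) _ (hpmem k hk.le) hdk1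
        have hcfk : dist c (f (p k)) < δ / 2 := by
          have h6 : |c - f (p k)| ≤ |f (p (k+1)) - f (p k)| := Set.abs_sub_left_of_mem_uIcc hc
          rw [Real.dist_eq] at hfk ⊢
          linarith
        have hdcf : dist c (f t) < δ :=
          lt_of_le_of_lt (dist_triangle c (f (p k)) (f t)) (by linarith)
        have hφdb : dist (φd c) (φd (f t)) < ε := hδφ _ hKc _ (hKf t htmem) hdcf
        rw [norm_mul, Real.norm_eq_abs, Real.norm_eq_abs]
        rw [Real.dist_eq] at hφdb
        exact mul_le_mul hφdb.le le_rfl (abs_nonneg _) hε.le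
      have hnm := intervalIntegral.norm_integral_le_abs_of_norm_le
        ((ae_restrict_mem measurableSet_uIoc).mono fun t ht => hb1 t ht)
        ((habsloc k hk).const_mul ε)
      rw [Real.norm_eq_abs, intervalIntegral.integral_const_mul,
        abs_of_nonneg (mul_nonneg hε.le
          (intervalIntegral.integral_nonneg (hpmono k) (fun t _ => abs_nonneg _)))] at hnm
      exact hnm
    have hsplit : φ (f b) - φ (f a) - (∫ t in a..b, φd (f t) * v t)
        = ∑ k ∈ Finset.range N,
            (φ (f (p (k+1))) - φ (f (p k)) - ∫ t in p k..p (k+1), φd (f t) * v t) := by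
      rw [htel, hint, ← Finset.sum_sub_distrib]
    rw [hsplit]
    refine le_trans (Finset.abs_sum_le_sum_abs _ _) ?_
    refine le_trans (Finset.sum_le_sum (fun k hk => hterm k (Finset.mem_range.1 hk))) ?_
    rw [← Finset.mul_sum, ← habsint]
    refine mul_le_mul_of_nonneg_left ?_ hε.le
    simp only [hC]
    linarith
  by_contra hne
  set D : ℝ := |φ (f b) - φ (f a) - ∫ t in a..b, φd (f t) * v t| with hD
  have hDpos : 0 < D := abs_pos.2 (sub_ne_zero.2 hne)
  have hCpos : (0:ℝ) < C := by linarith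
  have h7 := key (D / (2 * C)) (by positivity)
  have h8 : D / (2 * C) * C = D / 2 := by field_simp
  rw [h8] at h7
  linarith

lemma sq_primitive {v f : ℝ → ℝ} {a b : ℝ} (hab : a ≤ b)
    (hv : IntegrableOn v (Set.Icc a b) volume)
    (hf : ∀ t ∈ Set.Icc a b, f t = f a + ∫ s in a..t, v s) :
    f b ^ 2 / 2 - f a ^ 2 / 2 = ∫ t in a..b, f t * v t := by
  have h := chain_rule_primitive hab hv hf (φ := fun x => x ^ 2 / 2) (φd := fun x => x)
    (fun x => by simpa using (hasDerivAt_pow 2 x).div_const 2) continuous_id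
  simpa using h

lemma abs_primitive {v f : ℝ → ℝ} {a b : ℝ} (hab : a ≤ b)
    (hv : IntegrableOn v (Set.Icc a b) volume)
    (hf : ∀ t ∈ Set.Icc a b, f t = f a + ∫ s in a..t, v s) :
    |f b| - |f a| = ∫ t in a..b, Real.sign (f t) * v t := by
  set c : ℕ → ℝ := fun n => (((n : ℝ) + 1)⁻¹) ^ 2 with hc
  have hcpos : ∀ n, 0 < c n := fun n => by positivity
  have hder : ∀ (n : ℕ) (x : ℝ), HasDerivAt (fun x => Real.sqrt (x ^ 2 + c n))
      (x / Real.sqrt (x ^ 2 + c n)) x := by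
    intro n x
    have hpos : 0 < x ^ 2 + c n := by positivity
    have h1 : HasDerivAt (fun x : ℝ => x ^ 2 + c n) (2 * x) x := by
      simpa using (hasDerivAt_pow 2 x).add_const (c n)
    have h2 := (Real.hasDerivAt_sqrt hpos.ne').comp x h1
    have hs : Real.sqrt (x ^ 2 + c n) ≠ 0 := (Real.sqrt_pos.mpr hpos).ne'
    refine h2.congr_deriv ?_
    field_simp
  have hcont : ∀ n : ℕ, Continuous (fun x : ℝ => x / Real.sqrt (x ^ 2 + c n)) := by
    intro n
    refine continuous_id.div (Real.continuous_sqrt.comp (by continuity)) (fun x => ?_)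
    exact (Real.sqrt_pos.mpr (by positivity)).ne'
  have key : ∀ n : ℕ, Real.sqrt (f b ^ 2 + c n) - Real.sqrt (f a ^ 2 + c n)
      = ∫ t in a..b, (f t / Real.sqrt (f t ^ 2 + c n)) * v t :=
    fun n => chain_rule_primitive hab hv hf (hder n) (hcont n)
  -- limit of LHS
  have hc0 : Filter.Tendsto c Filter.atTop (𝓝 0) := by
    have h1 : Filter.Tendsto (fun n : ℕ => ((n : ℝ) + 1)⁻¹) Filter.atTop (𝓝 0) := by
      simpa [one_div] using (tendsto_one_div_add_atTop_nhds_zero_nat (𝕜 := ℝ))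
    have h2 := h1.pow 2
    simpa [hc, inv_pow] using h2
  have hsqrtlim : ∀ y : ℝ, Filter.Tendsto (fun n => Real.sqrt (y ^ 2 + c n)) Filter.atTop
      (𝓝 |y|) := by
    intro y
    have h1 : Filter.Tendsto (fun n => y ^ 2 + c n) Filter.atTop (𝓝 (y ^ 2)) := by
      simpa using tendsto_const_nhds.add hc0
    have h2 := (Real.continuous_sqrt.tendsto (y ^ 2)).comp h1
    simpa [Real.sqrt_sq_eq_abs, Function.comp_def] using h2
  have hL : Filter.Tendsto (fun n => Real.sqrt (f b ^ 2 + c n) - Real.sqrt (f a ^ 2 + c n))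
      Filter.atTop (𝓝 (|f b| - |f a|)) := (hsqrtlim (f b)).sub (hsqrtlim (f a))
  -- limit of RHS
  have hprim : ContinuousOn (fun t => f a + ∫ s in a..t, v s) (Set.Icc a b) := by
    have h2 := intervalIntegral.continuousOn_primitive_interval
      (a := a) (b := b) (μ := volume) (f := v) (by rwa [Set.uIcc_of_le hab])
    rw [Set.uIcc_of_le hab] at h2
    exact continuousOn_const.add h2
  have hfc : ContinuousOn f (Set.Icc a b) := hprim.congr hf
  have hmeasf : AEStronglyMeasurable f (volume.restrict (Set.Ioc a b)) :=
    (hfc.aestronglyMeasurable measurableSet_Icc).mono_measure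
      (Measure.restrict_mono Set.Ioc_subset_Icc_self le_rfl)
  have hv' : Integrable v (volume.restrict (Set.Ioc a b)) := hv.mono_set Set.Ioc_subset_Icc_self
  have hR : Filter.Tendsto (fun n => ∫ t in a..b, (f t / Real.sqrt (f t ^ 2 + c n)) * v t)
      Filter.atTop (𝓝 (∫ t in a..b, Real.sign (f t) * v t)) := by
    simp_rw [intervalIntegral.integral_of_le hab]
    refine MeasureTheory.tendsto_integral_of_dominated_convergence (fun t => |v t|)
      (fun n => ?_) ?_ (fun n => ?_) ?_
    · exact (((hcont n).comp_aestronglyMeasurable hmeasf)).mul hv'.1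
    · simpa [Real.norm_eq_abs] using hv'.norm
    · refine Filter.Eventually.of_forall fun t => ?_
      rw [norm_mul, Real.norm_eq_abs, Real.norm_eq_abs]
      have h1 : |f t / Real.sqrt (f t ^ 2 + c n)| ≤ 1 := by
        rw [abs_div, abs_of_nonneg (Real.sqrt_nonneg _)]
        rw [div_le_one (Real.sqrt_pos.mpr (by positivity))]
        calc |f t| = Real.sqrt (f t ^ 2) := (Real.sqrt_sq_eq_abs _).symm
          _ ≤ Real.sqrt (f t ^ 2 + c n) := Real.sqrt_le_sqrt (by linarith [hcpos n])
      calc |f t / Real.sqrt (f t ^ 2 + c n)| * |v t| ≤ 1 * |v t| :=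
            mul_le_mul_of_nonneg_right h1 (abs_nonneg _)
        _ = |v t| := one_mul _
    · refine Filter.Eventually.of_forall fun t => ?_
      by_cases hft : f t = 0
      · simp [hft, Real.sign_zero]
      · have h1 : Filter.Tendsto (fun n => f t / Real.sqrt (f t ^ 2 + c n)) Filter.atTop
            (𝓝 (f t / |f t|)) := tendsto_const_nhds.div (hsqrtlim (f t)) (abs_ne_zero.2 hft)
        have h2 : f t / |f t| = Real.sign (f t) := by
          rcases lt_or_gt_of_ne hft with h | h
          · rw [abs_of_neg h, Real.sign_of_neg h, div_neg, div_self hft]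
          · rw [abs_of_pos h, Real.sign_of_pos h, div_self hft]
        rw [h2] at h1
        exact h1.mul_const (v t)
  exact tendsto_nhds_unique (hL.congr (fun n => key n)) hR

lemma vanish_on_zero {v f : ℝ → ℝ} {a b : ℝ} (hab : a ≤ b)
    (hv : IntegrableOn v (Set.Icc a b) volume)
    (hf : ∀ t ∈ Set.Icc a b, f t = f a + ∫ s in a..t, v s) :
    ∀ᵐ t ∂(volume.restrict (Set.Ioc a b)), f t = 0 → v t = 0 := by
  classical
  have hvm : AEStronglyMeasurable v (volume.restrict (Set.Icc a b)) := hv.1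
  set vm : ℝ → ℝ := hvm.mk v with hvmdef
  have hvmeq : v =ᵐ[volume.restrict (Set.Icc a b)] vm := hvm.ae_eq_mk
  set u : ℝ → ℝ := (Set.Icc a b).indicator vm with hu
  have hum : StronglyMeasurable u := hvm.stronglyMeasurable_mk.indicator measurableSet_Icc
  have huint : Integrable u volume := by
    rw [hu, MeasureTheory.integrable_indicator_iff measurableSet_Icc]
    exact hv.congr hvmeq
  have huii : ∀ c d : ℝ, IntervalIntegrable u volume c d := fun c d => huint.intervalIntegrable
  set F : ℝ → ℝ := fun t => f a + ∫ s in a..t, u s with hF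
  have hFcont : Continuous F :=
    continuous_const.add (intervalIntegral.continuous_primitive (fun c d => huii c d) a)
  have hFprim : ∀ c t : ℝ, F t = F c + ∫ s in c..t, u s := by
    intro c t
    simp only [hF]
    rw [add_assoc]
    congr 1
    exact (intervalIntegral.integral_add_adjacent_intervals (huii a c) (huii c t)).symm
  have huv : v =ᵐ[volume.restrict (Set.Icc a b)] u := by
    refine hvmeq.trans ?_
    refine (ae_restrict_mem measurableSet_Icc).mono fun t ht => ?_
    rw [hu, Set.indicator_of_mem ht]
  have hFf : ∀ t ∈ Set.Icc a b, F t = f t := by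
    intro t ht
    rw [hF]
    simp only []
    rw [hf t ht]
    congr 1
    refine intervalIntegral.integral_congr_ae ?_
    have h0 : ∀ᵐ x ∂(volume : Measure ℝ), x ∈ Set.Icc a b → u x = v x :=
      (ae_restrict_iff' measurableSet_Icc).1 (huv.mono fun x h => h.symm)
    refine h0.mono fun x hx hmem => ?_
    refine hx ?_
    rw [Set.uIoc_of_le ht.1] at hmem
    exact ⟨le_of_lt hmem.1, le_trans hmem.2 ht.2⟩
  set Z : Set ℝ := {t | F t = 0} with hZ
  have hZm : MeasurableSet Z := hFcont.measurable (measurableSet_singleton 0)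
  set g : ℝ → ℝ := Z.indicator u with hg
  have hgm : StronglyMeasurable g := hum.indicator hZm
  have hgint : Integrable g volume := huint.indicator hZm
  -- Claim A: all interval integrals of g vanish
  have hA : ∀ c d : ℝ, c ≤ d → (∫ t in c..d, g t) = 0 := by
    intro c d hcd
    have keyn : ∀ n : ℕ,
        Real.arctan (((n:ℝ)+1) * F d) / ((n:ℝ)+1) - Real.arctan (((n:ℝ)+1) * F c) / ((n:ℝ)+1)
          = ∫ t in c..d, (1 + ((n:ℝ)+1)^2 * (F t)^2)⁻¹ * u t := by
      intro n
      have hm0 : (0:ℝ) < (n:ℝ)+1 := by positivity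
      refine chain_rule_primitive hcd huint.integrableOn (fun t _ => hFprim c t)
        (φ := fun x => Real.arctan (((n:ℝ)+1) * x) / ((n:ℝ)+1))
        (φd := fun x => (1 + ((n:ℝ)+1)^2 * x^2)⁻¹) (fun x => ?_) ?_
      · have h1 : HasDerivAt (fun x : ℝ => ((n:ℝ)+1) * x) ((n:ℝ)+1) x := by
          simpa using (hasDerivAt_id x).const_mul ((n:ℝ)+1)
        have h2 := (Real.hasDerivAt_arctan (((n:ℝ)+1) * x)).comp x h1
        have h3 := h2.div_const ((n:ℝ)+1)
        refine h3.congr_deriv ?_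
        have hden : (0:ℝ) < 1 + (((n:ℝ)+1) * x)^2 := by positivity
        field_simp
      · refine Continuous.inv₀
          (continuous_const.add (continuous_const.mul (continuous_pow 2))) (fun x => ?_)
        positivity
    have hLn : Filter.Tendsto (fun n : ℕ =>
        Real.arctan (((n:ℝ)+1) * F d) / ((n:ℝ)+1)
          - Real.arctan (((n:ℝ)+1) * F c) / ((n:ℝ)+1)) Filter.atTop (𝓝 0) := by
      have harct : ∀ y : ℝ, Filter.Tendsto
          (fun n : ℕ => Real.arctan (((n:ℝ)+1) * y) / ((n:ℝ)+1)) Filter.atTop (𝓝 0) := by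
        intro y
        refine squeeze_zero_norm (a := fun n : ℕ => (Real.pi / 2) * ((n:ℝ)+1)⁻¹)
          (fun n => ?_) ?_
        · rw [Real.norm_eq_abs, abs_div, abs_of_pos (by positivity : (0:ℝ) < (n:ℝ)+1),
            div_eq_mul_inv]
          refine mul_le_mul_of_nonneg_right ?_ (by positivity)
          have := Real.arctan_mem_Ioo ((((n:ℝ)+1) * y))
          rw [abs_le]
          exact ⟨(this.1).le, (this.2).le⟩
        · have h1 : Filter.Tendsto (fun n : ℕ => ((n : ℝ) + 1)⁻¹) Filter.atTop (𝓝 0) := by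
            simpa [one_div] using (tendsto_one_div_add_atTop_nhds_zero_nat (𝕜 := ℝ))
          simpa using h1.const_mul (Real.pi / 2)
      simpa using (harct (F d)).sub (harct (F c))
    have hR : Filter.Tendsto (fun n : ℕ =>
        ∫ t in c..d, (1 + ((n:ℝ)+1)^2 * (F t)^2)⁻¹ * u t) Filter.atTop
        (𝓝 (∫ t in c..d, g t)) := by
      simp_rw [intervalIntegral.integral_of_le hcd]
      refine MeasureTheory.tendsto_integral_of_dominated_convergence (fun t => |u t|)
        (fun n => ?_) ?_ (fun n => ?_) ?_
      · refine AEStronglyMeasurable.mul ?_ hum.aestronglyMeasurable.restrict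
        refine Continuous.aestronglyMeasurable ?_
        refine Continuous.inv₀
          (continuous_const.add (continuous_const.mul (hFcont.pow 2))) (fun x => ?_)
        positivity
      · simpa [Real.norm_eq_abs] using (huint.restrict (s := Set.Ioc c d)).norm
      · refine Filter.Eventually.of_forall fun t => ?_
        rw [norm_mul, Real.norm_eq_abs, Real.norm_eq_abs]
        have hd1 : (0:ℝ) < 1 + ((n:ℝ)+1)^2 * (F t)^2 := by positivity
        have h1 : |(1 + ((n:ℝ)+1)^2 * (F t)^2)⁻¹| ≤ 1 := by
          rw [abs_of_pos (by positivity)]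
          rw [inv_le_one_iff₀]
          right
          nlinarith [sq_nonneg (((n:ℝ)+1) * F t), sq_nonneg (F t), sq_nonneg ((n:ℝ)+1)]
        calc |(1 + ((n:ℝ)+1)^2 * (F t)^2)⁻¹| * |u t| ≤ 1 * |u t| :=
              mul_le_mul_of_nonneg_right h1 (abs_nonneg _)
          _ = |u t| := one_mul _
      · refine Filter.Eventually.of_forall fun t => ?_
        by_cases hFt : F t = 0
        · have hZt : t ∈ Z := hFt
          simp [hg, Set.indicator_of_mem hZt, hFt]
        · have hZt : t ∉ Z := hFt
          rw [hg, Set.indicator_of_notMem hZt]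
          have h1 : Filter.Tendsto (fun n : ℕ => ((n:ℝ)+1)) Filter.atTop Filter.atTop :=
            Filter.tendsto_atTop_add_const_right _ 1 tendsto_natCast_atTop_atTop
          have h2 : Filter.Tendsto (fun n : ℕ => ((n:ℝ)+1)^2) Filter.atTop Filter.atTop := by
            simpa [sq] using h1.atTop_mul_atTop₀ h1
          have h3 : Filter.Tendsto (fun n : ℕ => ((n:ℝ)+1)^2 * (F t)^2) Filter.atTop
              Filter.atTop := h2.atTop_mul_const (by positivity : 0 < (F t)^2)
          have h4 : Filter.Tendsto (fun n : ℕ => 1 + ((n:ℝ)+1)^2 * (F t)^2) Filter.atTop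
              Filter.atTop := Filter.tendsto_atTop_add_const_left _ 1 h3
          have h5 := h4.inv_tendsto_atTop
          have h6 : Filter.Tendsto (fun n : ℕ => (1 + ((n:ℝ)+1)^2 * (F t)^2)⁻¹ * u t)
              Filter.atTop (𝓝 (0 * u t)) := by
            exact (h5.congr (fun n => rfl)).mul_const (u t)
          simpa using h6
    exact tendsto_nhds_unique hR (hLn.congr (fun n => keyn n))
  -- Claim B: g = 0 a.e.
  have hB : ∀ᵐ t ∂(volume : Measure ℝ), g t = 0 := by
    have hfin : ∀ (h : ℝ → ℝ) (μ : Measure ℝ), Integrable h μ →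
        (∫⁻ t, ENNReal.ofReal (h t) ∂μ) ≠ ⊤ := by
      intro h μ hh
      refine ne_of_lt (lt_of_le_of_lt (lintegral_mono fun t => ?_) hh.2)
      exact Real.ofReal_le_enorm (h t)
    have hext : volume.withDensity (fun t => ENNReal.ofReal (g t))
        = volume.withDensity (fun t => ENNReal.ofReal (-g t)) := by
      haveI h1 : IsFiniteMeasure (volume.withDensity (fun t => ENNReal.ofReal (g t))) :=
        isFiniteMeasure_withDensity_ofReal hgint.2
      haveI h2 : IsFiniteMeasure (volume.withDensity (fun t => ENNReal.ofReal (-g t))) :=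
        isFiniteMeasure_withDensity_ofReal hgint.neg.2
      refine MeasureTheory.Measure.ext_of_Ioc _ _ (fun c d hcd => ?_)
      rw [withDensity_apply _ measurableSet_Ioc, withDensity_apply _ measurableSet_Ioc]
      have hgi : Integrable g (volume.restrict (Set.Ioc c d)) := hgint.restrict
      have h0 : ∫ t in Set.Ioc c d, g t ∂volume = 0 := by
        have h5 := hA c d hcd.le
        rwa [intervalIntegral.integral_of_le hcd.le] at h5
      have h1 := MeasureTheory.integral_eq_lintegral_pos_part_sub_lintegral_neg_part hgi
      rw [h0] at h1
      have h2 := hfin g _ hgi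
      have h3 := hfin (fun t => -g t) _ hgi.neg
      refine ((ENNReal.toReal_eq_toReal_iff' h2 h3).1 ?_)
      linarith [h1]
    have hae := (withDensity_eq_iff
      (ENNReal.measurable_ofReal.comp hgm.measurable).aemeasurable
      (ENNReal.measurable_ofReal.comp hgm.neg.measurable).aemeasurable
      (hfin g volume hgint)).1 hext
    refine hae.mono fun t ht => ?_
    simp only [Function.comp_apply, Pi.neg_apply] at ht
    by_contra hne
    rcases lt_or_gt_of_ne hne with h | h
    · have e1 : ENNReal.ofReal (g t) = 0 := by
        rw [ENNReal.ofReal_eq_zero]; exact h.le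
      have e2 : ENNReal.ofReal (-g t) ≠ 0 := by
        rw [Ne, ENNReal.ofReal_eq_zero, not_le]; linarith
      exact e2 (by rw [← ht, e1])
    · have e1 : ENNReal.ofReal (-g t) = 0 := by
        rw [ENNReal.ofReal_eq_zero]; linarith
      have e2 : ENNReal.ofReal (g t) ≠ 0 := by
        rw [Ne, ENNReal.ofReal_eq_zero, not_le]; linarith
      exact e2 (by rw [ht, e1])
  -- Conclusion
  have huv' : v =ᵐ[volume.restrict (Set.Ioc a b)] u :=
    Filter.EventuallyEq.filter_mono huv
      (ae_mono (Measure.restrict_mono Set.Ioc_subset_Icc_self le_rfl))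
  have hB' : ∀ᵐ t ∂(volume.restrict (Set.Ioc a b)), g t = 0 := ae_restrict_of_ae hB
  filter_upwards [ae_restrict_mem measurableSet_Ioc, huv', hB'] with t ht htv htg hft0
  have htZ : t ∈ Z := by
    show F t = 0
    rw [hFf t (Set.Ioc_subset_Icc_self ht)]
    exact hft0
  have h7 : g t = u t := Set.indicator_of_mem htZ u
  rw [htv, ← h7, htg]

lemma measurable_real_sign : Measurable Real.sign := by
  have h : Real.sign = fun r : ℝ => if r < 0 then (-1:ℝ) else if 0 < r then 1 else 0 := by
    funext r; rfl
  rw [h]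
  exact Measurable.ite measurableSet_Iio measurable_const
    (Measurable.ite measurableSet_Ioi measurable_const measurable_const)


end AuxiliaryLemmas

/-- Filippov set-valued sign map: `S a = {1}` if `a > 0`, `{-1}` if `a < 0`,
and `[-1, 1]` if `a = 0`. -/
noncomputable def filippovSign (a : ℝ) : Set ℝ :=
  if 0 < a then {1} else if a < 0 then {-1} else Set.Icc (-1) 1

/-- A Filippov solution of the twisting closed loop on `[0,∞)`: a pair of locally
absolutely continuous functions `x₁ x₂ : ℝ → ℝ` (encoded as indefinite integrals of
locally integrable functions `v₁ v₂` on `[0,∞)`) such that for a.e. `t ≥ 0`,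
`x₁' t = x₂ t` and `x₂' t ∈ -μ₂ • S(x₁ t) - μ₁ • S(x₂ t) + [-N, N]`. -/
def IsTwistingFilippovSolution (μ₁ μ₂ N : ℝ) (x₁ x₂ : ℝ → ℝ) : Prop :=
  ∃ v₁ v₂ : ℝ → ℝ,
    LocallyIntegrableOn v₁ (Set.Ici 0) volume ∧
    LocallyIntegrableOn v₂ (Set.Ici 0) volume ∧
    (∀ t, 0 ≤ t → x₁ t = x₁ 0 + ∫ s in (0 : ℝ)..t, v₁ s) ∧
    (∀ t, 0 ≤ t → x₂ t = x₂ 0 + ∫ s in (0 : ℝ)..t, v₂ s) ∧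
    (∀ᵐ t ∂(volume : Measure ℝ), 0 ≤ t →
      v₁ t = x₂ t ∧
      v₂ t ∈ {w : ℝ | ∃ s₁ ∈ filippovSign (x₁ t), ∃ s₂ ∈ filippovSign (x₂ t),
        ∃ d ∈ Set.Icc (-N) N, w = -μ₂ * s₁ - μ₁ * s₂ + d})

/-- The Lyapunov function `V(x₁, x₂) = μ₂ |x₁| + x₂² / 2`. -/
noncomputable def twistingV (μ₂ x₁ x₂ : ℝ) : ℝ := μ₂ * |x₁| + x₂ ^ 2 / 2

theorem stmt_11 (μ₁ μ₂ N : ℝ) (hN : 0 ≤ N) (hμ₁ : N ≤ μ₁) (hμ₂ : 0 < μ₂)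
    (x₁ x₂ : ℝ → ℝ) (hsol : IsTwistingFilippovSolution μ₁ μ₂ N x₁ x₂) :
    AntitoneOn (fun t => twistingV μ₂ (x₁ t) (x₂ t)) (Set.Ici 0) ∧
      ∀ R : ℝ, 0 < R → twistingV μ₂ (x₁ 0) (x₂ 0) ≤ R →
        ∀ t, 0 ≤ t → twistingV μ₂ (x₁ t) (x₂ t) ≤ R := by
  obtain ⟨v₁, v₂, hv₁, hv₂, hx₁, hx₂, hae⟩ := hsol
  have hIv₁ : ∀ b : ℝ, 0 ≤ b → IntegrableOn v₁ (Set.Icc 0 b) volume := fun b _ =>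
    hv₁.integrableOn_compact_subset Set.Icc_subset_Ici_self isCompact_Icc
  have hIv₂ : ∀ b : ℝ, 0 ≤ b → IntegrableOn v₂ (Set.Icc 0 b) volume := fun b _ =>
    hv₂.integrableOn_compact_subset Set.Icc_subset_Ici_self isCompact_Icc
  have key : ∀ a b : ℝ, 0 ≤ a → a ≤ b →
      twistingV μ₂ (x₁ b) (x₂ b) ≤ twistingV μ₂ (x₁ a) (x₂ a) := by
    intro a b ha hab
    have hb : 0 ≤ b := le_trans ha hab
    have hI1 : IntegrableOn v₁ (Set.Icc a b) volume :=
      (hIv₁ b hb).mono_set (Set.Icc_subset_Icc ha le_rfl)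
    have hI2 : IntegrableOn v₂ (Set.Icc a b) volume :=
      (hIv₂ b hb).mono_set (Set.Icc_subset_Icc ha le_rfl)
    have hprimgen : ∀ (v : ℝ → ℝ) (x : ℝ → ℝ), IntegrableOn v (Set.Icc 0 b) volume →
        (∀ t, 0 ≤ t → x t = x 0 + ∫ s in (0:ℝ)..t, v s) →
        ∀ t ∈ Set.Icc a b, x t = x a + ∫ s in a..t, v s := by
      intro v x hIv hxp t ht
      have hii : ∀ r : ℝ, 0 ≤ r → r ≤ b → IntervalIntegrable v volume 0 r := by
        intro r h1 h2
        rw [intervalIntegrable_iff', Set.uIcc_of_le h1]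
        exact hIv.mono_set (Set.Icc_subset_Icc le_rfl h2)
      have h2 : IntervalIntegrable v volume a t := by
        rw [intervalIntegrable_iff', Set.uIcc_of_le ht.1]
        exact hIv.mono_set (Set.Icc_subset_Icc ha ht.2)
      rw [hxp t (le_trans ha ht.1), hxp a ha, add_assoc]
      congr 1
      exact (intervalIntegral.integral_add_adjacent_intervals (hii a ha hab) h2).symm
    have hf₁ : ∀ t ∈ Set.Icc a b, x₁ t = x₁ a + ∫ s in a..t, v₁ s :=
      hprimgen v₁ x₁ (hIv₁ b hb) hx₁
    have hf₂' : ∀ t ∈ Set.Icc a b, x₂ t = x₂ a + ∫ s in a..t, v₂ s :=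
      hprimgen v₂ x₂ (hIv₂ b hb) hx₂
    have hsq := sq_primitive hab hI2 hf₂'
    have habs := abs_primitive hab hI1 hf₁
    have hvan := vanish_on_zero hab hI1 hf₁
    -- continuity of x₁, x₂ on [a,b]
    have hcont : ∀ (v x : ℝ → ℝ), IntegrableOn v (Set.Icc a b) volume →
        (∀ t ∈ Set.Icc a b, x t = x a + ∫ s in a..t, v s) →
        ContinuousOn x (Set.Icc a b) := by
      intro v x hIv hxp
      have h2 := intervalIntegral.continuousOn_primitive_interval
        (a := a) (b := b) (μ := volume) (f := v) (by rwa [Set.uIcc_of_le hab])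
      rw [Set.uIcc_of_le hab] at h2
      exact (continuousOn_const.add h2).congr hxp
    have hfc₁ : ContinuousOn x₁ (Set.Icc a b) := hcont v₁ x₁ hI1 hf₁
    have hfc₂ : ContinuousOn x₂ (Set.Icc a b) := hcont v₂ x₂ hI2 hf₂'
    -- integrability of integrands
    have hii₂ : IntervalIntegrable (fun t => x₂ t * v₂ t) volume a b := by
      obtain ⟨M2, hM2⟩ := isCompact_Icc.exists_bound_of_continuousOn hfc₂
      rw [intervalIntegrable_iff', Set.uIcc_of_le hab]
      refine MeasureTheory.Integrable.bdd_mul (c := M2) hI2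
        (hfc₂.aestronglyMeasurable measurableSet_Icc) ?_
      exact (ae_restrict_mem measurableSet_Icc).mono fun t ht => hM2 t ht
    have hii₁ : IntervalIntegrable (fun t => Real.sign (x₁ t) * v₁ t) volume a b := by
      rw [intervalIntegrable_iff', Set.uIcc_of_le hab]
      refine MeasureTheory.Integrable.bdd_mul (c := 1) hI1 ?_ ?_
      · exact (measurable_real_sign.comp_aemeasurable
          (hfc₁.aemeasurable measurableSet_Icc)).aestronglyMeasurable
      · refine Filter.Eventually.of_forall fun t => ?_
        rw [Real.norm_eq_abs]
        rcases Real.sign_apply_eq (x₁ t) with h | h | h <;> rw [h] <;> norm_num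
    -- identity for the difference of V
    have hW : twistingV μ₂ (x₁ b) (x₂ b) - twistingV μ₂ (x₁ a) (x₂ a)
        = ∫ t in a..b, (μ₂ * (Real.sign (x₁ t) * v₁ t) + x₂ t * v₂ t) := by
      rw [intervalIntegral.integral_add (hii₁.const_mul μ₂) hii₂,
        intervalIntegral.integral_const_mul, ← habs, ← hsq]
      simp only [twistingV]
      ring
    -- the integrand is a.e. nonpositive
    have hneg : (∫ t in a..b, (μ₂ * (Real.sign (x₁ t) * v₁ t) + x₂ t * v₂ t)) ≤ 0 := by
      rw [intervalIntegral.integral_of_le hab]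
      refine MeasureTheory.integral_nonpos_of_ae ?_
      filter_upwards [ae_restrict_of_ae hae, hvan, ae_restrict_mem measurableSet_Ioc]
        with t h1 h2 h3
      have ht0 : 0 ≤ t := le_trans ha h3.1.le
      obtain ⟨hveq, hmem⟩ := h1 ht0
      obtain ⟨s₁, hs₁, s₂, hs₂, d, hd, hv2⟩ := hmem
      show μ₂ * (Real.sign (x₁ t) * v₁ t) + x₂ t * v₂ t ≤ 0
      rw [hveq, hv2]
      -- fact about s₂
      have hC1 : 0 ≤ x₂ t * (μ₁ * s₂ - d) := by
        rcases lt_trichotomy (x₂ t) 0 with hY | hY | hY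
        · have hs₂' : s₂ = -1 := by
            simp only [filippovSign, if_neg (not_lt.mpr hY.le), if_pos hY] at hs₂
            simpa using hs₂
          rw [hs₂']
          have : μ₁ * (-1) - d ≤ 0 := by linarith [hd.1, hd.2]
          nlinarith
        · rw [hY]; simp
        · have hs₂' : s₂ = 1 := by
            simp only [filippovSign, if_pos hY] at hs₂
            simpa using hs₂
          rw [hs₂']
          have : 0 ≤ μ₁ * 1 - d := by linarith [hd.1, hd.2]
          nlinarith
      rcases lt_trichotomy (x₁ t) 0 with hX | hX | hX
      · have hsgn : Real.sign (x₁ t) = -1 := Real.sign_of_neg hX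
        have hs₁' : s₁ = -1 := by
          simp only [filippovSign, if_neg (not_lt_of_gt hX), if_pos hX] at hs₁
          simpa using hs₁
        rw [hsgn, hs₁']
        nlinarith [hC1]
      · have hY0 : x₂ t = 0 := by rw [← hveq]; exact h2 hX
        rw [hX, Real.sign_zero, hY0]
        simp
      · have hsgn : Real.sign (x₁ t) = 1 := Real.sign_of_pos hX
        have hs₁' : s₁ = 1 := by
          simp only [filippovSign, if_pos hX] at hs₁
          simpa using hs₁
        rw [hsgn, hs₁']
        nlinarith [hC1]
    linarith [hW, hneg]
  constructor
  · intro a ha b hb hab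
    exact key a b ha hab
  · intro R _ hR0 t ht
    exact le_trans (key 0 t le_rfl ht) hR0
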